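/- Let r ≥ 1 and let α₁,…,α_r be real numbers with 1, α₁,…,α_r linearly independent over ℚ. Let (m_ν) be the sequence of best approximations with M_ν = max_{1≤j≤r}|m_{j,ν}|. Then for every positive integer ν one has M_{ν + 2^{2r+1} - 2^{r+1}} ≥ 2·M_ν. -/

import Mathlib

open Finset MeasureTheory

/-- The value of the linear form: `ζ(m) = m₀ + Σ mⱼ αⱼ`. -/
def zetaF {r : ℕ} (α : Fin r → ℝ) (m₀ : ℤ) (m : Fin r → ℤ) : ℝ :=
  (m₀ : ℝ) + ∑ j, (m j : ℝ) * α j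

/-- `M(m) = max_{1 ≤ j ≤ r} |m_j|` (as a natural number). -/
def Mnorm {r : ℕ} (m : Fin r → ℤ) : ℕ :=
  Finset.univ.sup fun j => (m j).natAbs

/-- `m = (m₀, m₁, …, m_r)` is a best approximation (in the sense of linear form)
for `α₁, …, α_r`. -/
def IsBestApprox {r : ℕ} (α : Fin r → ℝ) (m₀ : ℤ) (m : Fin r → ℤ) : Prop :=
  m ≠ 0 ∧ 0 < zetaF α m₀ m ∧
    ∀ (n₀ : ℤ) (n : Fin r → ℤ), n ≠ 0 → Mnorm n ≤ Mnorm m →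
      zetaF α m₀ m ≤ |zetaF α n₀ n|

/-- `(mz ν, m ν)` is the sequence of all best approximations, ordered by
strictly increasing `M_ν`. -/
def IsBASeq {r : ℕ} (α : Fin r → ℝ) (mz : ℕ → ℤ) (m : ℕ → Fin r → ℤ) : Prop :=
  (∀ ν, IsBestApprox α (mz ν) (m ν)) ∧
  StrictMono (fun ν => Mnorm (m ν)) ∧
  ∀ (p₀ : ℤ) (p : Fin r → ℤ), IsBestApprox α p₀ p → ∃ ν, p₀ = mz ν ∧ p = m ν

/-- `1, α₁, …, α_r` are linearly independent over `ℚ`. -/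
def LinIndepWithOne {r : ℕ} (α : Fin r → ℝ) : Prop :=
  LinearIndependent ℚ (Fin.cons (1 : ℝ) α : Fin (r + 1) → ℝ)

/-- `(α₁, …, α_r)` is a `ψ`-singular tuple (in the sense of linear form). -/
def IsPsiSingular {r : ℕ} (α : Fin r → ℝ) (ψ : ℝ → ℝ) : Prop :=
  ∀ T : ℝ, 1 < T → ∃ n : Fin r → ℤ, n ≠ 0 ∧ (∀ j, (|n j| : ℝ) ≤ T) ∧
    ∃ n₀ : ℤ, |zetaF α n₀ n| < ψ T

/-- `M_{ν + 2^{2r+1} - 2^{r+1}} ≥ 2 M_ν`. -/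

lemma zetaF_sub {r : ℕ} (α : Fin r → ℝ) (a₀ b₀ : ℤ) (a b : Fin r → ℤ) :
    zetaF α (a₀ - b₀) (a - b) = zetaF α a₀ a - zetaF α b₀ b := by
  simp only [zetaF, Pi.sub_apply]
  push_cast
  simp only [sub_mul]
  rw [Finset.sum_sub_distrib]
  ring

lemma natAbs_le_Mnorm {r : ℕ} (m : Fin r → ℤ) (i : Fin r) : (m i).natAbs ≤ Mnorm m := by
  rw [Mnorm]
  exact Finset.le_sup (f := fun j => (m j).natAbs) (Finset.mem_univ i)

theorem stmt1 (r : ℕ) (hr : 1 ≤ r) (α : Fin r → ℝ) (hα : LinIndepWithOne α)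
    (mz : ℕ → ℤ) (m : ℕ → Fin r → ℤ) (hBA : IsBASeq α mz m) (ν : ℕ) :
    2 * Mnorm (m ν) ≤ Mnorm (m (ν + (2 ^ (2 * r + 1) - 2 ^ (r + 1)))) := by
  by_contra hcon
  push_neg at hcon
  obtain ⟨hbest, hmono, -⟩ := hBA
  set K := 2 ^ (2 * r + 1) - 2 ^ (r + 1) with hK
  set M : ℕ := Mnorm (m ν) with hMdef
  have hM0 : 0 < M := by
    rcases Nat.eq_zero_or_pos M with h0 | h
    · exact absurd (funext fun i => Int.natAbs_eq_zero.mp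
        (Nat.le_zero.mp (h0 ▸ natAbs_le_Mnorm (m ν) i))) (hbest ν).1
    · exact h
  have hMZ : (0 : ℤ) < (M : ℤ) := by exact_mod_cast hM0
  -- bounds on coordinates of m (ν + j) for j ≤ K
  have hbound : ∀ j ≤ K, ∀ i, -(2 * (M : ℤ)) < m (ν + j) i ∧ m (ν + j) i < 2 * M := by
    intro j hj i
    have h1 : (m (ν + j) i).natAbs ≤ Mnorm (m (ν + j)) := natAbs_le_Mnorm _ _
    have h2 : Mnorm (m (ν + j)) ≤ Mnorm (m (ν + K)) :=
      hmono.monotone (by omega : ν + j ≤ ν + K)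
    have h3 : (m (ν + j) i).natAbs < 2 * M := by omega
    omega
  -- pigeonhole
  have hcard : (Fintype.piFinset fun _ : Fin r => Finset.Icc (0:ℤ) 3).card
      < (Finset.range (K + 1)).card := by
    rw [Fintype.card_piFinset, Finset.card_range]
    simp only [Int.card_Icc]
    have h3 : ((3:ℤ) + 1 - 0).toNat = 4 := rfl
    rw [h3, Finset.prod_const, Finset.card_univ, Fintype.card_fin]
    have h4 : (4 : ℕ) ^ r = 2 ^ (2 * r) := by
      rw [show (4:ℕ) = 2 ^ 2 from rfl, ← pow_mul]
    rw [h4]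
    have h5 : 2 ^ (r + 1) ≤ 2 ^ (2 * r) := Nat.pow_le_pow_right (by norm_num) (by omega)
    have h6 : 2 ^ (2 * r + 1) = 2 * 2 ^ (2 * r) := by rw [pow_succ]; ring
    have h7 : 0 < 2 ^ (2*r) := Nat.pow_pos (by norm_num)
    omega
  have hmaps : ∀ j ∈ Finset.range (K + 1),
      (fun i => (m (ν + j) i + 2 * (M : ℤ)) / (M : ℤ))
        ∈ Fintype.piFinset fun _ : Fin r => Finset.Icc (0:ℤ) 3 := by
    intro j hj
    rw [Fintype.mem_piFinset]
    intro i
    rw [Finset.mem_Icc]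
    obtain ⟨hlo, hhi⟩ := hbound j (by simpa using Nat.lt_succ_iff.mp (Finset.mem_range.mp hj)) i
    constructor
    · exact Int.ediv_nonneg (by linarith) (le_of_lt hMZ)
    · have heq := Int.mul_ediv_add_emod (m (ν + j) i + 2 * (M : ℤ)) (M : ℤ)
      have hr1 : 0 ≤ (m (ν + j) i + 2 * (M : ℤ)) % (M : ℤ) :=
        Int.emod_nonneg _ (ne_of_gt hMZ)
      have hq4 : (M : ℤ) * ((m (ν + j) i + 2 * (M : ℤ)) / (M : ℤ)) < (M : ℤ) * 4 := by
        linarith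
      have := lt_of_mul_lt_mul_left hq4 (le_of_lt hMZ)
      omega
  obtain ⟨a, ha, b, hb, hab, hfab⟩ :=
    Finset.exists_ne_map_eq_of_card_lt_of_maps_to hcard hmaps
  have ha' : a ≤ K := Nat.lt_succ_iff.mp (Finset.mem_range.mp ha)
  have hb' : b ≤ K := Nat.lt_succ_iff.mp (Finset.mem_range.mp hb)
  set A := ν + a with hA
  set B := ν + b with hB
  -- coordinate differences are small
  have hdiff : ∀ i, -(M : ℤ) < m A i - m B i ∧ m A i - m B i < M := by
    intro i
    have hA1 := Int.mul_ediv_add_emod (m A i + 2 * (M : ℤ)) (M : ℤ)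
    have hB1 := Int.mul_ediv_add_emod (m B i + 2 * (M : ℤ)) (M : ℤ)
    have hrA0 : 0 ≤ (m A i + 2 * (M : ℤ)) % (M : ℤ) := Int.emod_nonneg _ (ne_of_gt hMZ)
    have hrB0 : 0 ≤ (m B i + 2 * (M : ℤ)) % (M : ℤ) := Int.emod_nonneg _ (ne_of_gt hMZ)
    have hrA1 : (m A i + 2 * (M : ℤ)) % (M : ℤ) < M := Int.emod_lt_of_pos _ hMZ
    have hrB1 : (m B i + 2 * (M : ℤ)) % (M : ℤ) < M := Int.emod_lt_of_pos _ hMZ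
    have hqeq : (m A i + 2 * (M : ℤ)) / (M : ℤ) = (m B i + 2 * (M : ℤ)) / (M : ℤ) :=
      congrFun hfab i
    rw [hqeq] at hA1
    constructor <;> linarith
  -- the difference vector
  set n : Fin r → ℤ := m A - m B with hn
  have hnne : n ≠ 0 := by
    intro h0
    have : m A = m B := by
      funext i
      have := congrFun h0 i
      simp only [hn, Pi.sub_apply, Pi.zero_apply] at this
      linarith
    have : A = B := hmono.injective (by simp [this])
    omega
  have hMn : Mnorm n ≤ M := by
    apply Finset.sup_le
    intro i _
    have := hdiff i
    simp only [hn, Pi.sub_apply]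
    omega
  -- zeta values
  have hζν : 0 < zetaF α (mz ν) (m ν) := (hbest ν).2.1
  have hle : ∀ j ≤ K, zetaF α (mz (ν + j)) (m (ν + j)) ≤ zetaF α (mz ν) (m ν) := by
    intro j hj
    have := (hbest (ν + j)).2.2 (mz ν) (m ν) (hbest ν).1
      (hmono.monotone (by omega : ν ≤ ν + j))
    rwa [abs_of_pos hζν] at this
  have hA2 : 0 < zetaF α (mz A) (m A) := (hbest A).2.1
  have hB2 : 0 < zetaF α (mz B) (m B) := (hbest B).2.1
  have hA3 := hle a ha'
  have hB3 := hle b hb'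
  have hkey := (hbest ν).2.2 (mz A - mz B) n hnne (by rw [← hMdef]; exact hMn)
  rw [hn, zetaF_sub] at hkey
  have habs : |zetaF α (mz A) (m A) - zetaF α (mz B) (m B)| < zetaF α (mz ν) (m ν) := by
    rw [abs_lt]
    constructor <;> linarith
  linarith
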